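/- arXiv:2005.00657 — 7 statements merged into one kernel-verified Lean document; each statement's English description precedes it below -/
import Mathlib

section
/- Let μ > 0 and γ > 0 with γ ≥ √μ/2. Then for every x ∈ ℝ, the function F(u) = (x − u)²/(2μ) + log(γ² + u²) is strictly convex on ℝ. -/
/-- For `μ > 0`, `γ > 0` with `γ ≥ √μ / 2`, the forward–backward sub-problem
`F(u) = (x − u)²/(2μ) + log(γ² + u²)` is strictly convex on `ℝ` for every `x`. -/
theorem cauchy_prox_objective_strictConvexOn
    (μ γ : ℝ) (hμ : 0 < μ) (hγ : 0 < γ) (hcond : Real.sqrt μ / 2 ≤ γ) (x : ℝ) :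
    StrictConvexOn ℝ (Set.univ : Set ℝ)
      (fun u : ℝ => (x - u) ^ 2 / (2 * μ) + Real.log (γ ^ 2 + u ^ 2)) := by
  have hγμ : μ ≤ 4 * γ ^ 2 := by
    have h1 : Real.sqrt μ ≤ 2 * γ := by linarith
    have h2 : Real.sqrt μ ^ 2 ≤ (2 * γ) ^ 2 := by
      have := Real.sqrt_nonneg μ
      nlinarith
    rw [Real.sq_sqrt hμ.le] at h2; linarith
  have hpos : ∀ u : ℝ, 0 < γ ^ 2 + u ^ 2 := fun u => by positivity
  -- derivative
  have hderiv : ∀ u : ℝ,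
      HasDerivAt (fun u : ℝ => (x - u) ^ 2 / (2 * μ) + Real.log (γ ^ 2 + u ^ 2))
        ((u - x) / μ + 2 * u / (γ ^ 2 + u ^ 2)) u := by
    intro u
    have h1 : HasDerivAt (fun u : ℝ => (x - u) ^ 2 / (2 * μ)) ((u - x) / μ) u := by
      have h := (((hasDerivAt_id u).const_sub x).pow 2).div_const (2 * μ)
      refine h.congr_deriv ?_
      simp only [id]
      field_simp
      ring
    have h2 : HasDerivAt (fun u : ℝ => Real.log (γ ^ 2 + u ^ 2))
        (2 * u / (γ ^ 2 + u ^ 2)) u := by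
      have hi : HasDerivAt (fun u : ℝ => γ ^ 2 + u ^ 2) (2 * u) u := by
        have := ((hasDerivAt_id u).pow 2).const_add (γ ^ 2)
        simpa using this
      exact hi.log (hpos u).ne'
    exact h1.add h2
  have hdiff : ∀ u : ℝ,
      deriv (fun u : ℝ => (x - u) ^ 2 / (2 * μ) + Real.log (γ ^ 2 + u ^ 2)) u
        = (u - x) / μ + 2 * u / (γ ^ 2 + u ^ 2) := fun u => (hderiv u).deriv
  have hcont : Continuous
      (fun u : ℝ => (x - u) ^ 2 / (2 * μ) + Real.log (γ ^ 2 + u ^ 2)) :=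
    Differentiable.continuous fun u => (hderiv u).differentiableAt
  apply StrictMono.strictConvexOn_univ_of_deriv hcont
  intro a b hab
  rw [hdiff a, hdiff b]
  have ha := hpos a
  have hb := hpos b
  have key : (γ ^ 2 + a ^ 2) * (γ ^ 2 + b ^ 2) + 2 * μ * (γ ^ 2 - a * b) > 0 := by
    rcases le_or_gt (a * b) 0 with hab0 | hab0
    · nlinarith [sq_nonneg γ, mul_pos ha hb]
    · nlinarith [sq_nonneg (a * b + γ ^ 2 - μ), mul_pos (pow_pos hγ 2) (pow_pos (sub_pos.mpr hab) 2), mul_nonneg hμ.le (by linarith : (0:ℝ) ≤ 4 * γ ^ 2 - μ)]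
  have expand : (b - x) / μ + 2 * b / (γ ^ 2 + b ^ 2)
      - ((a - x) / μ + 2 * a / (γ ^ 2 + a ^ 2))
      = (b - a) * ((γ ^ 2 + a ^ 2) * (γ ^ 2 + b ^ 2) + 2 * μ * (γ ^ 2 - a * b))
        / (μ * ((γ ^ 2 + a ^ 2) * (γ ^ 2 + b ^ 2))) := by
    field_simp
    ring
  have hden : 0 < μ * ((γ ^ 2 + a ^ 2) * (γ ^ 2 + b ^ 2)) := by positivity
  have : 0 < (b - a) * ((γ ^ 2 + a ^ 2) * (γ ^ 2 + b ^ 2) + 2 * μ * (γ ^ 2 - a * b))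
      / (μ * ((γ ^ 2 + a ^ 2) * (γ ^ 2 + b ^ 2))) := by
    apply div_pos _ hden
    exact mul_pos (by linarith) key
  linarith [expand ▸ this]
end

section
/- Let n ∈ ℕ, μ > 0 and γ > 0 with γ ≥ √μ/2. Then for every x ∈ ℝⁿ, the function F(u) = ‖x − u‖²/(2μ) + Σᵢ log(γ² + uᵢ²) is strictly convex on Euclidean space ℝⁿ, where ‖·‖ is the Euclidean norm. -/
lemma cauchy_oneDim (μ γ c : ℝ) (hμ : 0 < μ) (hγ : 0 < γ) (hμ4 : μ ≤ 4 * γ^2) :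
    StrictConvexOn ℝ (Set.univ : Set ℝ)
      (fun t : ℝ => (c - t)^2 / (2*μ) + Real.log (γ^2 + t^2)) := by
  set f : ℝ → ℝ := fun t => (c - t)^2 / (2*μ) + Real.log (γ^2 + t^2) with hf
  set f1 : ℝ → ℝ := fun t => (t - c)/μ + 2*t/(γ^2 + t^2) with hf1
  set f2 : ℝ → ℝ := fun t => 1/μ + (2*(γ^2 + t^2) - 2*t*(2*t))/((γ^2 + t^2)^2) with hf2
  have hden : ∀ t : ℝ, 0 < γ^2 + t^2 := fun t => by positivity
  have hd1 : ∀ t, HasDerivAt f (f1 t) t := by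
    intro t
    have h1 : HasDerivAt (fun t : ℝ => (c - t)^2 / (2*μ)) ((t - c)/μ) t := by
      have h := (((hasDerivAt_id t).const_sub c).pow 2).div_const (2*μ)
      refine h.congr_deriv ?_
      simp
      ring
    have h2 : HasDerivAt (fun t : ℝ => γ^2 + t^2) (2*t) t := by
      simpa using ((hasDerivAt_pow 2 t).const_add (γ^2))
    have h3 := h2.log (ne_of_gt (hden t))
    exact h1.add h3
  have hd2 : ∀ t, HasDerivAt f1 (f2 t) t := by
    intro t
    have h1 : HasDerivAt (fun t : ℝ => (t - c)/μ) (1/μ) t := by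
      simpa using ((hasDerivAt_id t).sub_const c).div_const μ
    have h2 : HasDerivAt (fun t : ℝ => γ^2 + t^2) (2*t) t := by
      simpa using ((hasDerivAt_pow 2 t).const_add (γ^2))
    have hn : HasDerivAt (fun t : ℝ => 2*t) 2 t := by
      simpa using (hasDerivAt_id t).const_mul 2
    have h3 := hn.div h2 (ne_of_gt (hden t))
    exact h1.add h3
  have keyexpr : ∀ t : ℝ, f2 t =
      ((γ^2+t^2)^2 + μ*(2*(γ^2+t^2) - 2*t*(2*t))) / (μ*(γ^2+t^2)^2) := by
    intro t
    have := (hden t).ne'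
    simp only [hf2]
    field_simp [hf2]
  have keynn : ∀ t : ℝ, 0 ≤ (γ^2+t^2)^2 + μ*(2*(γ^2+t^2) - 2*t*(2*t)) := by
    intro t
    rcases le_or_gt (t^2) (γ^2) with h | h
    · nlinarith [sq_nonneg (γ^2+t^2), mul_nonneg hμ.le (sub_nonneg.2 h)]
    · have h2 : μ*(2*t^2-2*γ^2) ≤ 4*γ^2*(2*t^2-2*γ^2) :=
        mul_le_mul_of_nonneg_right hμ4 (by linarith)
      nlinarith [sq_nonneg (t^2-3*γ^2)]
  have f2nn : ∀ t, 0 ≤ f2 t := by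
    intro t
    rw [keyexpr t]
    exact div_nonneg (keynn t) (by positivity)
  have f2pos : ∀ t : ℝ, t^2 ≠ 3*γ^2 → 0 < f2 t := by
    intro t ht
    have h1 : (t^2 - 3*γ^2) ≠ 0 := sub_ne_zero.2 ht
    have h2 : 0 < (t^2 - 3*γ^2)^2 :=
      lt_of_le_of_ne (sq_nonneg _) (Ne.symm (pow_ne_zero 2 h1))
    have key : 0 < (γ^2+t^2)^2 + μ*(2*(γ^2+t^2) - 2*t*(2*t)) := by
      rcases le_or_gt (t^2) (γ^2) with h | h
      · nlinarith [pow_pos (hden t) 2, mul_nonneg hμ.le (sub_nonneg.2 h)]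
      · have h3 : μ*(2*t^2-2*γ^2) ≤ 4*γ^2*(2*t^2-2*γ^2) :=
          mul_le_mul_of_nonneg_right hμ4 (by linarith)
        nlinarith
    rw [keyexpr t]
    exact div_pos key (by positivity)
  have hdiff1 : Differentiable ℝ f1 := fun t => (hd2 t).differentiableAt
  have hderiv1 : deriv f1 = f2 := funext fun t => (hd2 t).deriv
  have hmono : Monotone f1 :=
    monotone_of_deriv_nonneg hdiff1 (fun t => by rw [hderiv1]; exact f2nn t)
  have hsm : StrictMono f1 := by
    intro a b hab
    rcases lt_or_eq_of_le (hmono hab.le) with h | heq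
    · exact h
    · exfalso
      have hconst : ∀ s ∈ Set.Icc a b, f1 s = f1 a := by
        intro s hs
        exact le_antisymm (heq ▸ hmono hs.2) (hmono hs.1)
      have hzero : ∀ t ∈ Set.Ioo a b, t^2 = 3*γ^2 := by
        intro t ht
        by_contra hne
        have hev : f1 =ᶠ[nhds t] (fun _ => f1 a) :=
          Filter.eventuallyEq_of_mem (Ioo_mem_nhds ht.1 ht.2)
            (fun s hs => hconst s ⟨hs.1.le, hs.2.le⟩)
        have : deriv f1 t = 0 := by rw [hev.deriv_eq]; simp
        rw [hderiv1] at this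
        exact absurd this (ne_of_gt (f2pos t hne))
      have e1 := hzero (a+(b-a)/4) ⟨by linarith, by linarith⟩
      have e2 := hzero (a+(b-a)/2) ⟨by linarith, by linarith⟩
      have e3 := hzero (a+3*(b-a)/4) ⟨by linarith, by linarith⟩
      have d1 : (b-a)/4 * (2*a + 3*(b-a)/4) = 0 := by linear_combination e2 - e1
      have d2 : (b-a)/4 * (2*a + 5*(b-a)/4) = 0 := by linear_combination e3 - e2
      have hba : (b-a)/4 ≠ 0 := ne_of_gt (by linarith)
      have z1 : 2*a + 3*(b-a)/4 = 0 := (mul_eq_zero.1 d1).resolve_left hba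
      have z2 : 2*a + 5*(b-a)/4 = 0 := (mul_eq_zero.1 d2).resolve_left hba
      linarith
  have hcont : Continuous f := by
    have : Differentiable ℝ f := fun t => (hd1 t).differentiableAt
    exact this.continuous
  have hderivf : deriv f = f1 := funext fun t => (hd1 t).deriv
  exact StrictMono.strictConvexOn_univ_of_deriv hcont (hderivf ▸ hsm)

/-- For `μ > 0`, `γ > 0` with `γ ≥ √μ / 2`, the multivariate forward–backward sub-problem
`F(u) = ‖x − u‖²/(2μ) + ∑ᵢ log(γ² + uᵢ²)` is strictly convex on Euclidean `ℝⁿ`. -/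
theorem cauchy_prox_objective_strictConvexOn_euclidean
    (n : ℕ) (μ γ : ℝ) (hμ : 0 < μ) (hγ : 0 < γ) (hcond : Real.sqrt μ / 2 ≤ γ)
    (x : EuclideanSpace ℝ (Fin n)) :
    StrictConvexOn ℝ (Set.univ : Set (EuclideanSpace ℝ (Fin n)))
      (fun u : EuclideanSpace ℝ (Fin n) =>
        ‖x - u‖ ^ 2 / (2 * μ) + ∑ i, Real.log (γ ^ 2 + (u i) ^ 2)) := by
  have hsq : Real.sqrt μ ≤ 2 * γ := by linarith
  have hμ4 : μ ≤ 4 * γ^2 := by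
    nlinarith [Real.sq_sqrt hμ.le, Real.sqrt_nonneg μ]
  have hone : ∀ i : Fin n, StrictConvexOn ℝ (Set.univ : Set ℝ)
      (fun t : ℝ => (x i - t)^2 / (2*μ) + Real.log (γ^2 + t^2)) :=
    fun i => cauchy_oneDim μ γ (x i) hμ hγ hμ4
  have hF : ∀ u : EuclideanSpace ℝ (Fin n),
      ‖x - u‖ ^ 2 / (2 * μ) + ∑ i, Real.log (γ ^ 2 + (u i) ^ 2)
        = ∑ i, ((x i - u i)^2 / (2*μ) + Real.log (γ^2 + (u i)^2)) := by
    intro u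
    have hnorm : ‖x - u‖^2 = ∑ i, (x i - u i)^2 := by
      rw [EuclideanSpace.norm_eq, Real.sq_sqrt (by positivity)]
      simp [Real.norm_eq_abs, sq_abs]
    rw [hnorm, Finset.sum_div, ← Finset.sum_add_distrib]
  constructor
  · exact convex_univ
  · intro u _ v _ huv a b ha hb hab
    obtain ⟨j, hj⟩ : ∃ j, u j ≠ v j := by
      by_contra h; push_neg at h; exact huv (PiLp.ext h)
    simp only [hF, smul_eq_mul, Finset.mul_sum, ← Finset.sum_add_distrib]
    have happ : ∀ i, (a • u + b • v) i = a * u i + b * v i := by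
      intro i
      simp [PiLp.add_apply, PiLp.smul_apply, smul_eq_mul]
    apply Finset.sum_lt_sum
    · intro i _
      have h := (hone i).convexOn.2 (Set.mem_univ (u i)) (Set.mem_univ (v i))
        ha.le hb.le hab
      rw [happ i]
      simpa using h
    · refine ⟨j, Finset.mem_univ j, ?_⟩
      have h := (hone j).2 (Set.mem_univ (u j)) (Set.mem_univ (v j)) hj ha hb hab
      rw [happ j]
      simpa using h
end

section
/- Let γ > 0. Then the function u ↦ log(γ² + u²) + u²/(8γ²) is convex on ℝ; that is, the Cauchy-based penalty ψ_γ is (1/(4γ²))-weakly convex. -/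
/-- For `γ > 0`, the function `u ↦ log(γ² + u²) + u²/(8γ²)` is convex on `ℝ`;
i.e. the Cauchy-based penalty is `(1/(4γ²))`-weakly convex. -/
theorem cauchy_penalty_weakly_convex
    (γ : ℝ) (hγ : 0 < γ) :
    ConvexOn ℝ (Set.univ : Set ℝ)
      (fun u : ℝ => Real.log (γ ^ 2 + u ^ 2) + u ^ 2 / (8 * γ ^ 2)) := by
  have hγ2 : (0:ℝ) < γ ^ 2 := by positivity
  have hpos : ∀ u : ℝ, (0:ℝ) < γ ^ 2 + u ^ 2 := fun u => by positivity
  set f' : ℝ → ℝ := fun u => 2 * u / (γ ^ 2 + u ^ 2) + u / (4 * γ ^ 2) with hf'def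
  set f'' : ℝ → ℝ := fun u =>
    (2 * (γ ^ 2 + u ^ 2) - 2 * u * (2 * u)) / (γ ^ 2 + u ^ 2) ^ 2 + 1 / (4 * γ ^ 2) with hf''def
  apply convexOn_of_hasDerivWithinAt2_nonneg (f' := f') (f'' := f'') convex_univ
  · exact (Continuous.continuousOn (by
      have : Continuous fun u : ℝ => γ ^ 2 + u ^ 2 := by continuity
      exact ((this.log (fun u => (hpos u).ne')).add (by continuity))))
  · intro x _
    have h1 : HasDerivAt (fun u : ℝ => γ ^ 2 + u ^ 2) (2 * x) x := by
      simpa using ((hasDerivAt_pow 2 x).const_add (γ ^ 2))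
    have hlog : HasDerivAt (fun u : ℝ => Real.log (γ ^ 2 + u ^ 2))
        (2 * x / (γ ^ 2 + x ^ 2)) x := by
      exact (Real.hasDerivAt_log (hpos x).ne').comp x h1 |>.congr_deriv
        (by ring : (γ ^ 2 + x ^ 2)⁻¹ * (2 * x) = 2 * x / (γ ^ 2 + x ^ 2))
    have hq : HasDerivAt (fun u : ℝ => u ^ 2 / (8 * γ ^ 2)) (x / (4 * γ ^ 2)) x := by
      have := (hasDerivAt_pow 2 x).div_const (8 * γ ^ 2)
      convert this using 1
      · rfl
      · rfl
      field_simp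
      ring
    exact (hlog.add hq).hasDerivWithinAt
  · intro x _
    have h1 : HasDerivAt (fun u : ℝ => γ ^ 2 + u ^ 2) (2 * x) x := by
      simpa using ((hasDerivAt_pow 2 x).const_add (γ ^ 2))
    have h2 : HasDerivAt (fun u : ℝ => 2 * u) 2 x := by
      simpa using (hasDerivAt_id x).const_mul 2
    have hdiv : HasDerivAt (fun u : ℝ => 2 * u / (γ ^ 2 + u ^ 2))
        ((2 * (γ ^ 2 + x ^ 2) - 2 * x * (2 * x)) / (γ ^ 2 + x ^ 2) ^ 2) x :=
      h2.div h1 (hpos x).ne'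
    have hlin : HasDerivAt (fun u : ℝ => u / (4 * γ ^ 2)) (1 / (4 * γ ^ 2)) x := by
      have := (hasDerivAt_id x).div_const (4 * γ ^ 2)
      simpa [one_div] using this
    exact (hdiv.add hlin).hasDerivWithinAt
  · intro x _
    have key : f'' x = (x ^ 2 - 3 * γ ^ 2) ^ 2 / (4 * γ ^ 2 * (γ ^ 2 + x ^ 2) ^ 2) := by
      simp only [hf''def]
      field_simp
      ring
    rw [key]
    positivity
end

section
/- Let μ > 0 and γ > 0 with γ ≥ √μ/2. Then for every x ∈ ℝ, the cubic equation u³ − x u² + (γ² + 2μ)u − x γ² = 0 has exactly one real solution u. -/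
/-- For `μ > 0`, `γ > 0` with `γ ≥ √μ / 2`, and any `x ∈ ℝ`, the cubic equation
`u³ − x u² + (γ² + 2μ) u − x γ² = 0` has exactly one real solution. -/
theorem cauchy_prox_cubic_unique_root
    (μ γ : ℝ) (hμ : 0 < μ) (hγ : 0 < γ) (hcond : Real.sqrt μ / 2 ≤ γ) (x : ℝ) :
    ∃! u : ℝ, u ^ 3 - x * u ^ 2 + (γ ^ 2 + 2 * μ) * u - x * γ ^ 2 = 0 := by
  have hμ4 : μ / 4 ≤ γ ^ 2 := by
    nlinarith [Real.sq_sqrt hμ.le, Real.sqrt_nonneg μ]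
  -- existence via intermediate value theorem
  set f : ℝ → ℝ := fun u => u ^ 3 - x * u ^ 2 + (γ ^ 2 + 2 * μ) * u - x * γ ^ 2 with hf
  have hcont : Continuous f := by fun_prop
  set M : ℝ := |x| + 1 with hM
  have hx1 : x ≤ |x| := le_abs_self x
  have hx2 : -|x| ≤ x := neg_abs_le x
  have hxnn : 0 ≤ |x| := abs_nonneg x
  have hle : (-M : ℝ) ≤ M := by simp [hM]; linarith
  have hmem : (0 : ℝ) ∈ Set.Icc (f (-M)) (f M) := by
    constructor
    · show f (-M) ≤ 0
      simp only [hf, hM]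
      nlinarith [sq_nonneg (|x| + 1), sq_nonneg γ]
    · show (0 : ℝ) ≤ f M
      simp only [hf, hM]
      nlinarith [sq_nonneg (|x| + 1), sq_nonneg γ]
  obtain ⟨u, _, hu⟩ := intermediate_value_Icc hle hcont.continuousOn hmem
  refine ⟨u, hu, ?_⟩
  intro v hv
  -- uniqueness
  by_contra hne
  have hE : (v - u) * ((γ ^ 2 * (v ^ 2 + u ^ 2) + v ^ 2 * u ^ 2 + γ ^ 4
      + 2 * μ * γ ^ 2 - 2 * μ * (v * u)))
      = f v * (γ ^ 2 + u ^ 2) - f u * (γ ^ 2 + v ^ 2) := by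
    simp only [hf]; ring
  have hfv : f v = 0 := hv
  rw [hfv, hu] at hE
  have hvu : v - u ≠ 0 := sub_ne_zero.mpr hne
  have hvusq : 0 < (v - u) ^ 2 :=
    lt_of_le_of_ne (sq_nonneg _) (Ne.symm (pow_ne_zero 2 hvu))
  have hEpos : 0 < γ ^ 2 * (v ^ 2 + u ^ 2) + v ^ 2 * u ^ 2 + γ ^ 4
      + 2 * μ * γ ^ 2 - 2 * μ * (v * u) := by
    have h1 : (v * u + γ ^ 2 - μ) ^ 2 ≥ 0 := sq_nonneg _
    have h2 : 0 < γ ^ 2 * (v - u) ^ 2 := mul_pos (by positivity) hvusq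
    nlinarith
  simp only [zero_mul, sub_zero] at hE
  rcases mul_eq_zero.mp hE with h | h
  · exact hvu h
  · exact absurd h hEpos.ne'
end

section
/- Let μ > 0 and γ > 0 with γ ≥ √μ/2, and let x ∈ ℝ. Then the function F(u) = (x − u)²/(2μ) + log(γ² + u²) attains its infimum on ℝ at a unique point u*; i.e. the Cauchy proximal operator prox^μ_{Cauchy}(x) is well defined as the unique global minimizer of F, and u* is the unique real root of u³ − x u² + (γ² + 2μ)u − x γ² = 0. -/
/-- For `μ > 0`, `γ > 0` with `γ ≥ √μ / 2`, and `x ∈ ℝ`, the proximal objective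
`F(u) = (x − u)²/(2μ) + log(γ² + u²)` attains its infimum at a unique point `u*`,
i.e. the Cauchy proximal operator is well defined as the unique global minimizer of `F`,
and `u*` is the unique real root of `u³ − x u² + (γ² + 2μ) u − x γ² = 0`. -/
theorem cauchy_prox_well_defined
    (μ γ : ℝ) (hμ : 0 < μ) (hγ : 0 < γ) (hcond : Real.sqrt μ / 2 ≤ γ) (x : ℝ) :
    ∃ u : ℝ,
      (∀ v : ℝ,
          (x - u) ^ 2 / (2 * μ) + Real.log (γ ^ 2 + u ^ 2)
            ≤ (x - v) ^ 2 / (2 * μ) + Real.log (γ ^ 2 + v ^ 2)) ∧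
      (∀ w : ℝ,
          (∀ v : ℝ,
            (x - w) ^ 2 / (2 * μ) + Real.log (γ ^ 2 + w ^ 2)
              ≤ (x - v) ^ 2 / (2 * μ) + Real.log (γ ^ 2 + v ^ 2)) → w = u) ∧
      (u ^ 3 - x * u ^ 2 + (γ ^ 2 + 2 * μ) * u - x * γ ^ 2 = 0) ∧
      (∀ w : ℝ, w ^ 3 - x * w ^ 2 + (γ ^ 2 + 2 * μ) * w - x * γ ^ 2 = 0 → w = u) := by
  -- from the hypothesis, μ ≤ 4γ²
  have h4 : μ ≤ 4 * γ ^ 2 := by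
    have h2γ : Real.sqrt μ ≤ 2 * γ := by linarith
    have := Real.sq_sqrt hμ.le
    nlinarith [Real.sqrt_nonneg μ]
  -- the auxiliary function g
  set g : ℝ → ℝ := fun u => u + 2*μ*u/(γ^2+u^2) with hg
  -- g is strictly monotone
  have gmono : StrictMono g := by
    intro a b hab
    have da : (0:ℝ) < γ^2 + a^2 := by positivity
    have db : (0:ℝ) < γ^2 + b^2 := by positivity
    simp only [hg]
    rw [← sub_pos]
    have h : (b + 2*μ*b/(γ^2+b^2)) - (a + 2*μ*a/(γ^2+a^2))
        = ((b-a)*((γ^2+a^2)*(γ^2+b^2) + 2*μ*(γ^2 - a*b)))/((γ^2+a^2)*(γ^2+b^2)) := by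
      field_simp
      ring
    rw [h]
    apply div_pos _ (by positivity)
    have hB : 0 < (γ^2+a^2)*(γ^2+b^2) + 2*μ*(γ^2 - a*b) := by
      nlinarith [sq_nonneg (a*b + γ^2 - μ), mul_nonneg hμ.le (by linarith : (0:ℝ) ≤ 4*γ^2 - μ),
        mul_pos (mul_pos hγ hγ) (mul_pos (sub_pos.2 hab) (sub_pos.2 hab))]
    nlinarith [sub_pos.2 hab]
  have gcont : Continuous g := by
    apply continuous_id.add
    exact (continuous_const.mul continuous_id).div (by continuity) (fun u => by positivity)
  -- existence of a root c of g c = x by IVT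
  set M : ℝ := |x| + 1 with hM
  have hMpos : 0 < M := by positivity
  have hgM : x ≤ g M := by
    have : 0 ≤ 2*μ*M/(γ^2+M^2) := by positivity
    have hx : x ≤ M := by
      have := le_abs_self x; linarith
    simp only [hg]; linarith
  have hgmM : g (-M) ≤ x := by
    have h1 : 2*μ*(-M)/(γ^2+(-M)^2) ≤ 0 := by
      apply div_nonpos_of_nonpos_of_nonneg (by nlinarith) (by positivity)
    have hx : -M ≤ x := by
      have := neg_abs_le x; linarith
    simp only [hg]; linarith
  obtain ⟨c, _, hc⟩ : ∃ c ∈ Set.Icc (-M) M, g c = x := by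
    have := intermediate_value_Icc (by linarith : -M ≤ M) gcont.continuousOn
    obtain ⟨c, hc1, hc2⟩ := this ⟨hgmM, hgM⟩
    exact ⟨c, hc1, hc2⟩
  have hcx : c + 2*μ*c/(γ^2+c^2) = x := hc
  have dc : (0:ℝ) < γ^2 + c^2 := by positivity
  -- the objective and its derivative
  set F : ℝ → ℝ := fun v => (x - v)^2/(2*μ) + Real.log (γ^2 + v^2) with hF
  have hD : ∀ v : ℝ, HasDerivAt F ((v - x)/μ + 2*v/(γ^2+v^2)) v := by
    intro v
    have h1 : HasDerivAt (fun v : ℝ => (x - v)^2/(2*μ)) ((v - x)/μ) v := by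
      have h := (((hasDerivAt_id v).const_sub x).pow 2).div_const (2*μ)
      refine h.congr_deriv ?_
      simp only [id]
      field_simp
      ring
    have h2 : HasDerivAt (fun v : ℝ => Real.log (γ^2 + v^2)) (2*v/(γ^2+v^2)) v := by
      have hpow : HasDerivAt (fun v : ℝ => γ^2 + v^2) (2*v) v := by
        simpa using (hasDerivAt_pow 2 v).const_add (γ^2)
      exact hpow.log (by positivity)
    exact h1.add h2
  have hFc : Continuous F := by
    apply Continuous.add
    · exact ((continuous_const.sub continuous_id).pow 2).div_const _
    · exact Continuous.log (by continuity) (fun v => by positivity)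
  -- derivative sign
  have hDsign : ∀ v : ℝ, (v - x)/μ + 2*v/(γ^2+v^2) = (g v - x)/μ := by
    intro v
    have dv : (0:ℝ) < γ^2 + v^2 := by positivity
    simp only [hg]
    field_simp
    ring
  -- F is strictly monotone on [c, ∞) and strictly antitone on (−∞, c]
  have hmono : StrictMonoOn F (Set.Ici c) := by
    apply strictMonoOn_of_deriv_pos (convex_Ici c) hFc.continuousOn
    intro v hv
    rw [interior_Ici] at hv
    rw [(hD v).deriv, hDsign v]
    apply div_pos _ hμ
    have := gmono hv
    rw [hc] at this
    linarith
  have hanti : StrictAntiOn F (Set.Iic c) := by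
    apply strictAntiOn_of_deriv_neg (convex_Iic c) hFc.continuousOn
    intro v hv
    rw [interior_Iic] at hv
    rw [(hD v).deriv, hDsign v]
    apply div_neg_of_neg_of_pos _ hμ
    have := gmono hv
    rw [hc] at this
    linarith
  -- c is a strict global minimizer
  have hstrict : ∀ v : ℝ, v ≠ c → F c < F v := by
    intro v hv
    rcases lt_or_gt_of_ne hv with h | h
    · exact hanti (le_of_lt h) (le_refl c) h
    · exact hmono (le_refl c) (le_of_lt h) h
  have hmin : ∀ v : ℝ, F c ≤ F v := by
    intro v
    by_cases h : v = c
    · rw [h]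
    · exact (hstrict v h).le
  refine ⟨c, hmin, ?_, ?_, ?_⟩
  · -- uniqueness of the minimizer
    intro w hw
    by_contra hne
    exact absurd (hw c) (not_le.2 (hstrict w hne))
  · -- c satisfies the cubic
    have h := hcx
    field_simp at h
    linear_combination h
  · -- uniqueness of the cubic root
    intro w hw
    have dw : (0:ℝ) < γ^2 + w^2 := by positivity
    have hgw : g w = x := by
      simp only [hg]
      field_simp
      linear_combination hw
    rcases lt_trichotomy w c with h | h | h
    · have := gmono h
      rw [hgw, hc] at this
      exact absurd this (lt_irrefl x)
    · exact h
    · have := gmono h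
      rw [hgw, hc] at this
      exact absurd this (lt_irrefl x)
end

section
/- Let μ > 0 and γ > 0 with γ ≥ √μ/2, and let x ∈ ℝ. With p = γ² + 2μ − x²/3 and q = xγ² + 2x³/27 − (x/3)(γ² + 2μ), the Cardano discriminant satisfies p³/27 + q²/4 ≥ 0, so the square root appearing in Cardano's formula for the Cauchy proximal operator is real. -/
/-- For `μ > 0`, `γ > 0` with `γ ≥ √μ / 2`, and any `x ∈ ℝ`, the Cardano discriminant
`p³/27 + q²/4` of the Cauchy proximal cubic is nonnegative, where
`p = γ² + 2μ − x²/3` and `q = xγ² + 2x³/27 − (x/3)(γ² + 2μ)`. -/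
theorem cardano_discriminant_nonneg
    (μ γ : ℝ) (hμ : 0 < μ) (hγ : 0 < γ) (hcond : Real.sqrt μ / 2 ≤ γ) (x : ℝ)
    (p q : ℝ)
    (hp : p = γ ^ 2 + 2 * μ - x ^ 2 / 3)
    (hq : q = x * γ ^ 2 + 2 * x ^ 3 / 27 - (x / 3) * (γ ^ 2 + 2 * μ)) :
    0 ≤ p ^ 3 / 27 + q ^ 2 / 4 := by
  have h1 : Real.sqrt μ ≤ 2 * γ := by linarith
  have h2 : μ ≤ 4 * γ ^ 2 := by
    nlinarith [Real.sq_sqrt hμ.le, Real.sqrt_nonneg μ]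
  have key : 2916 * γ ^ 2 * (p ^ 3 / 27 + q ^ 2 / 4) =
      27 * ((2 * γ ^ 2 * x ^ 2 + (2 * γ ^ 4 - 10 * γ ^ 2 * μ - μ ^ 2)) ^ 2
        + μ * (4 * γ ^ 2 - μ) ^ 3) := by
    subst hp hq; ring
  have hrhs : 0 ≤ 27 * ((2 * γ ^ 2 * x ^ 2 + (2 * γ ^ 4 - 10 * γ ^ 2 * μ - μ ^ 2)) ^ 2
        + μ * (4 * γ ^ 2 - μ) ^ 3) := by
    have h3 : (0:ℝ) ≤ 4 * γ ^ 2 - μ := by linarith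
    have := mul_nonneg hμ.le (pow_nonneg h3 3)
    nlinarith [sq_nonneg (2 * γ ^ 2 * x ^ 2 + (2 * γ ^ 4 - 10 * γ ^ 2 * μ - μ ^ 2))]
  nlinarith [key, hrhs, sq_nonneg γ, mul_pos hγ hγ]
end

section
/- Let μ > 0 and γ > 0 with γ < √μ/2. Then for every x ∈ ℝ, the function F(u) = (x − u)²/(2μ) + log(γ² + u²) is not convex on ℝ; in particular its second derivative is strictly negative at u = √3·γ. -/
lemma monotone_deriv_nonneg_aux {g : ℝ → ℝ} {g' a : ℝ} (hm : Monotone g)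
    (hd : HasDerivAt g g' a) : 0 ≤ g' := by
  have h := hasDerivAt_iff_tendsto_slope.mp hd
  have h2 : Filter.Tendsto (slope g a) (nhdsWithin a (Set.Ioi a)) (nhds g') :=
    h.mono_left (nhdsWithin_mono _ (by intro y hy; exact ne_of_gt hy))
  refine ge_of_tendsto h2 ?_
  filter_upwards [self_mem_nhdsWithin] with b hb
  have hb' : a < b := hb
  rw [slope_def_field]
  exact div_nonneg (by linarith [hm hb'.le]) (by linarith)

/-- For `μ > 0` and `γ > 0` with `γ < √μ / 2`, the proximal objective
`F(u) = (x − u)²/(2μ) + log(γ² + u²)` is not convex on `ℝ` for every `x`;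
in particular its second derivative is strictly negative at `u = √3 · γ`. -/
theorem cauchy_prox_objective_not_convex
    (μ γ : ℝ) (hμ : 0 < μ) (hγ : 0 < γ) (hcond : γ < Real.sqrt μ / 2) (x : ℝ) :
    ¬ ConvexOn ℝ (Set.univ : Set ℝ)
        (fun u : ℝ => (x - u) ^ 2 / (2 * μ) + Real.log (γ ^ 2 + u ^ 2)) ∧
      deriv (deriv (fun u : ℝ => (x - u) ^ 2 / (2 * μ) + Real.log (γ ^ 2 + u ^ 2)))
          (Real.sqrt 3 * γ) < 0 := by
  set F : ℝ → ℝ := fun u : ℝ => (x - u) ^ 2 / (2 * μ) + Real.log (γ ^ 2 + u ^ 2) with hFdef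
  have hpos : ∀ u : ℝ, 0 < γ ^ 2 + u ^ 2 := fun u => by positivity
  have hF1 : ∀ u : ℝ, HasDerivAt F ((u - x) / μ + 2 * u / (γ ^ 2 + u ^ 2)) u := by
    intro u
    have h1 : HasDerivAt (fun u : ℝ => (x - u) ^ 2 / (2 * μ)) ((u - x) / μ) u := by
      have := (((hasDerivAt_id u).const_sub x).pow 2).div_const (2 * μ)
      refine this.congr_deriv ?_
      simp only [id]
      field_simp
      ring
    have h2 : HasDerivAt (fun u : ℝ => Real.log (γ ^ 2 + u ^ 2))
        (2 * u / (γ ^ 2 + u ^ 2)) u := by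
      have hq : HasDerivAt (fun u : ℝ => γ ^ 2 + u ^ 2) (2 * u) u := by
        have := ((hasDerivAt_id u).pow 2).const_add (γ ^ 2)
        refine this.congr_deriv ?_
        simp
      exact (hq.log (hpos u).ne')
    exact h1.add h2
  have hderivF : deriv F = fun u : ℝ => (u - x) / μ + 2 * u / (γ ^ 2 + u ^ 2) :=
    funext fun u => (hF1 u).deriv
  have hF2 : ∀ u : ℝ, HasDerivAt (deriv F)
      (1 / μ + 2 * (γ ^ 2 - u ^ 2) / (γ ^ 2 + u ^ 2) ^ 2) u := by
    intro u
    rw [hderivF]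
    have h1 : HasDerivAt (fun u : ℝ => (u - x) / μ) (1 / μ) u :=
      ((hasDerivAt_id u).sub_const x).div_const μ
    have h2 : HasDerivAt (fun u : ℝ => 2 * u / (γ ^ 2 + u ^ 2))
        (2 * (γ ^ 2 - u ^ 2) / (γ ^ 2 + u ^ 2) ^ 2) u := by
      have hn : HasDerivAt (fun u : ℝ => 2 * u) 2 u := by
        simpa using (hasDerivAt_id u).const_mul 2
      have hq : HasDerivAt (fun u : ℝ => γ ^ 2 + u ^ 2) (2 * u) u := by
        have := ((hasDerivAt_id u).pow 2).const_add (γ ^ 2)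
        refine this.congr_deriv ?_
        simp
      have := hn.div hq (hpos u).ne'
      refine this.congr_deriv ?_
      field_simp
      ring
    exact h1.add h2
  set a : ℝ := Real.sqrt 3 * γ with ha
  have ha2 : a ^ 2 = 3 * γ ^ 2 := by
    rw [ha, mul_pow, Real.sq_sqrt (by norm_num : (3:ℝ) ≥ 0)]
  have hμγ : 4 * γ ^ 2 < μ := by
    have h1 : 2 * γ < Real.sqrt μ := by linarith
    have h2 : (2 * γ) ^ 2 < Real.sqrt μ ^ 2 :=
      pow_lt_pow_left₀ h1 (by positivity) (by norm_num)
    rw [Real.sq_sqrt hμ.le] at h2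
    nlinarith
  have hval : deriv (deriv F) a = 1 / μ - 1 / (4 * γ ^ 2) := by
    rw [(hF2 a).deriv, ha2]
    have h4 : γ ^ 2 + 3 * γ ^ 2 = 4 * γ ^ 2 := by ring
    rw [h4]
    field_simp
    ring
  have hneg : deriv (deriv F) a < 0 := by
    rw [hval]
    have h1 : 1 / μ < 1 / (4 * γ ^ 2) :=
      one_div_lt_one_div_of_lt (by positivity) hμγ
    linarith
  refine ⟨fun hc => ?_, hneg⟩
  have hmono : Monotone (deriv F) := by
    have := hc.monotoneOn_deriv (fun u _ => (hF1 u).differentiableAt)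
    exact monotoneOn_univ.mp this
  have := monotone_deriv_nonneg_aux hmono (hF2 a)
  rw [(hF2 a).deriv] at hneg
  linarith
end
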